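/- Fix p, q ∈ ℝ and set P = (p,q). The point P belongs to the orbit {P'(r) : r ∈ ℝ} if and only if 4p + q² ≥ 0. Consequently, Beloch's curve 𝓕 equals the orbit {P'(r) : r ∈ ℝ} when 4p + q² ≥ 0, and 𝓕 is the disjoint union of the orbit and the isolated set {P} when 4p + q² < 0. -/

import Mathlib

/-- The reflection of a point `Q = (u,v)` across the line
`ℓ_r = {(x,y) : x + r*y - r^2 = 0}`. -/
noncomputable def reflLine (r : ℝ) (Q : ℝ × ℝ) : ℝ × ℝ :=
  (Q.1 - 2 * (Q.1 + r * Q.2 - r ^ 2) / (1 + r ^ 2) * 1,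
   Q.2 - 2 * (Q.1 + r * Q.2 - r ^ 2) / (1 + r ^ 2) * r)

/-- Beloch's polynomial `F(x,y)` associated with `P = (p,q)`. -/
def belochF (p q x y : ℝ) : ℝ :=
  2 * (q - y) ^ 2 - (q + y) * (q - y) * (p - x) - (p - x) ^ 2 * (p + x)

lemma denom_pos (r : ℝ) : (0:ℝ) < 1 + r ^ 2 := by positivity

/-- forward: every reflected point lies on the curve -/
lemma onCurve (p q r : ℝ) :
    belochF p q (reflLine r (p, q)).1 (reflLine r (p, q)).2 = 0 := by
  have h : (1 + r ^ 2 : ℝ) ≠ 0 := (denom_pos r).ne'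
  simp only [reflLine, belochF]
  field_simp
  ring

/-- membership of P in the orbit implies nonneg discriminant -/
lemma mem_imp (p q : ℝ) (h : (p, q) ∈ Set.range (fun r : ℝ => reflLine r (p, q))) :
    4 * p + q ^ 2 ≥ 0 := by
  obtain ⟨r, hr⟩ := h
  have h1 := congrArg Prod.fst hr
  have hden : (1 + r ^ 2 : ℝ) ≠ 0 := (denom_pos r).ne'
  simp only [reflLine] at h1
  have hz : p + r * q - r ^ 2 = 0 := by
    field_simp at h1
    linarith [h1]
  nlinarith [sq_nonneg (2 * r - q)]

lemma mem_of (p q : ℝ) (h : 4 * p + q ^ 2 ≥ 0) :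
    (p, q) ∈ Set.range (fun r : ℝ => reflLine r (p, q)) := by
  set s := Real.sqrt (4 * p + q ^ 2) with hs
  have hss : s ^ 2 = 4 * p + q ^ 2 := Real.sq_sqrt h
  refine ⟨(q + s) / 2, ?_⟩
  have hz : p + (q + s) / 2 * q - ((q + s) / 2) ^ 2 = 0 := by nlinarith
  simp only [reflLine, hz]
  norm_num

lemma curve_eq (p q : ℝ) :
    {X : ℝ × ℝ | belochF p q X.1 X.2 = 0} =
      Set.range (fun r : ℝ => reflLine r (p, q)) ∪ {(p, q)} := by
  ext ⟨x, y⟩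
  simp only [Set.mem_setOf_eq, Set.mem_union, Set.mem_range, Set.mem_singleton_iff,
    Prod.mk.injEq]
  constructor
  · intro hF
    by_cases hx : x = p
    · right
      subst hx
      simp only [belochF, sub_self] at hF
      have : (q - y) ^ 2 = 0 := by nlinarith [hF]
      have : q - y = 0 := by exact pow_eq_zero_iff (n := 2) (by norm_num) |>.mp this
      constructor; rfl; linarith
    · left
      have hs : p - x ≠ 0 := fun h => hx (by linarith [sub_eq_zero.mp h])
      refine ⟨(q - y) / (p - x), ?_⟩
      have hden : (1 + ((q - y) / (p - x)) ^ 2 : ℝ) ≠ 0 := (denom_pos _).ne'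
      simp only [reflLine, belochF] at hF ⊢
      rw [Prod.ext_iff]
      refine ⟨?_, ?_⟩ <;> simp only
      · field_simp
        linear_combination hF
      · field_simp
        linear_combination (q - y) * hF
  · rintro (⟨r, hr⟩ | ⟨hx, hy⟩)
    · have := onCurve p q r
      rw [hr] at this
      exact this
    · subst hx; subst hy; simp [belochF]

/-- `P = (p,q)` belongs to the orbit `{P'(r) : r ∈ ℝ}` iff `4p + q² ≥ 0`;
consequently Beloch's curve `𝓕` equals the orbit when `4p + q² ≥ 0`, and is
the disjoint union of the orbit and `{P}` when `4p + q² < 0`. -/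
theorem stmt_6 (p q : ℝ) :
    ((p, q) ∈ Set.range (fun r : ℝ => reflLine r (p, q)) ↔ 4 * p + q ^ 2 ≥ 0) ∧
    (4 * p + q ^ 2 ≥ 0 →
      {X : ℝ × ℝ | belochF p q X.1 X.2 = 0} =
        Set.range (fun r : ℝ => reflLine r (p, q))) ∧
    (4 * p + q ^ 2 < 0 →
      {X : ℝ × ℝ | belochF p q X.1 X.2 = 0} =
        Set.range (fun r : ℝ => reflLine r (p, q)) ∪ {(p, q)} ∧
      (p, q) ∉ Set.range (fun r : ℝ => reflLine r (p, q))) := by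
  refine ⟨⟨mem_imp p q, mem_of p q⟩, ?_, ?_⟩
  · intro h
    rw [curve_eq]
    have := mem_of p q h
    rw [Set.union_eq_self_of_subset_right (by simpa using this)]
  · intro h
    exact ⟨curve_eq p q, fun hm => absurd (mem_imp p q hm) (not_le.mpr h)⟩
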